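/- Let G be a strongly connected signed digraph and let L̂ = (W·L + Lᵀ·W)/2 be its mirror Laplacian, a real symmetric matrix with real eigenvalues λ_1(L̂) ≤ λ_2(L̂) ≤ … ≤ λ_n(L̂) listed in increasing order with multiplicity. Then G is structurally balanced if and only if 0 = λ_1(L̂) < λ_2(L̂); that is, if and only if L̂ is positive semidefinite and 0 is an eigenvalue of L̂ of multiplicity exactly one. -/

import Mathlib

open Matrix BigOperators Filter

/-- In-degree of node `i`: sum of absolute values of the `i`-th row of `A`. -/
noncomputable def inDeg {n : ℕ} (A : Matrix (Fin n) (Fin n) ℝ) (i : Fin n) : ℝ := ∑ j, |A i j|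

/-- Laplacian `L = Δ − A` of the signed digraph with adjacency matrix `A`. -/
noncomputable def lapOf {n : ℕ} (A : Matrix (Fin n) (Fin n) ℝ) : Matrix (Fin n) (Fin n) ℝ :=
  Matrix.diagonal (inDeg A) - A

/-- Laplacian `L̄ = Δ − Ā` of the induced unsigned digraph. -/
noncomputable def lapBar {n : ℕ} (A : Matrix (Fin n) (Fin n) ℝ) : Matrix (Fin n) (Fin n) ℝ :=
  Matrix.diagonal (inDeg A) - Matrix.of (fun i j => |A i j|)

/-- `det(L̄_ii)`: determinant of `L̄` with its `i`-th row and column removed. -/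
noncomputable def minorDet {n : ℕ} (A : Matrix (Fin n) (Fin n) ℝ) (i : Fin n) : ℝ :=
  Matrix.det ((lapBar A).submatrix (fun k : {j : Fin n // j ≠ i} => (k : Fin n))
    (fun k : {j : Fin n // j ≠ i} => (k : Fin n)))

/-- `W = diag(det(L̄_11), …, det(L̄_nn))`. -/
noncomputable def Wmat {n : ℕ} (A : Matrix (Fin n) (Fin n) ℝ) : Matrix (Fin n) (Fin n) ℝ :=
  Matrix.diagonal (minorDet A)

/-- Mirror adjacency matrix `Â = (W·A + Aᵀ·W)/2`. -/
noncomputable def mirrorAdj {n : ℕ} (A : Matrix (Fin n) (Fin n) ℝ) : Matrix (Fin n) (Fin n) ℝ :=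
  (1/2 : ℝ) • (Wmat A * A + Aᵀ * Wmat A)

/-- Mirror Laplacian `L̂ = (W·L + Lᵀ·W)/2`. -/
noncomputable def mirrorLap {n : ℕ} (A : Matrix (Fin n) (Fin n) ℝ) : Matrix (Fin n) (Fin n) ℝ :=
  (1/2 : ℝ) • (Wmat A * lapOf A + (lapOf A)ᵀ * Wmat A)

/-- `(j, i)` is a directed edge when `a_ij ≠ 0`; strong connectivity: a directed
path between every ordered pair of distinct nodes. -/
def StronglyConnected {n : ℕ} (A : Matrix (Fin n) (Fin n) ℝ) : Prop :=
  ∀ i j : Fin n, i ≠ j → Relation.TransGen (fun u v => A v u ≠ 0) i j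

/-- `σ` is the diagonal of a gauge transformation: each entry is `±1`. -/
def IsGauge {n : ℕ} (σ : Fin n → ℝ) : Prop := ∀ i, σ i = 1 ∨ σ i = -1

/-- Structural balance: there is a gauge transformation `D = diag σ` with all entries
of `D·A·D` (entrywise `σ i * A i j * σ j`) nonnegative. -/
def StructBalanced {n : ℕ} (A : Matrix (Fin n) (Fin n) ℝ) : Prop :=
  ∃ σ : Fin n → ℝ, IsGauge σ ∧ ∀ i j, 0 ≤ σ i * A i j * σ j

/-- Improved Laplacian potential function
`Φ_e(x) = Σ_i Σ_j det(L̄_ii)·|a_ij|·(x_i − sgn(a_ij)·x_j)²`. -/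
noncomputable def PhiE {n : ℕ} (A : Matrix (Fin n) (Fin n) ℝ) (x : Fin n → ℝ) : ℝ :=
  ∑ i, ∑ j, minorDet A i * |A i j| * (x i - Real.sign (A i j) * x j) ^ 2

section AuxLemmas
variable {n : ℕ}

section Cofactor
variable {n : ℕ}

/-- a matrix whose rows all sum to zero has zero determinant (n > 0). -/
lemma det_eq_zero_of_rowsum_zero (hn : 0 < n) (M : Matrix (Fin n) (Fin n) ℝ)
    (h : ∀ i, ∑ j, M i j = 0) : M.det = 0 := by
  rw [← Matrix.exists_mulVec_eq_zero_iff]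
  refine ⟨fun _ => 1, ?_, ?_⟩
  · intro hv
    have : (fun _ : Fin n => (1:ℝ)) ⟨0, hn⟩ = 0 := by rw [hv]; rfl
    simpa using this
  · funext i
    simpa [Matrix.mulVec, dotProduct] using h i

lemma det_updateRow_single_eq (M : Matrix (Fin n) (Fin n) ℝ) (k : Fin n)
    (hn : 0 < n) (hrow : ∀ i, i ≠ k → ∑ j, M i j = 0) (i : Fin n) :
    (M.updateRow k (Pi.single i 1)).det = (M.updateRow k (Pi.single k 1)).det := by
  have hv : (Pi.single i 1 : Fin n → ℝ) = Pi.single k 1 + (Pi.single i 1 - Pi.single k 1) := by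
    abel
  rw [hv, Matrix.det_updateRow_add]
  have h0 : (M.updateRow k (Pi.single i 1 - Pi.single k 1)).det = 0 := by
    apply det_eq_zero_of_rowsum_zero hn
    intro l
    by_cases hl : l = k
    · subst hl
      simp [Matrix.updateRow_self, Pi.sub_apply, Finset.sum_sub_distrib]
    · have : ∀ j, M.updateRow k (Pi.single i 1 - Pi.single k 1) l j = M l j :=
        fun j => congrFun (Matrix.updateRow_ne hl) j
      simp only [this]
      exact hrow l hl
  rw [h0, add_zero]

end Cofactor

lemma det_updateRow_single_self (M : Matrix (Fin n) (Fin n) ℝ) (k : Fin n) :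
    (M.updateRow k (Pi.single k 1)).det =
      (M.submatrix (fun j : {j : Fin n // j ≠ k} => (j : Fin n))
        (fun j : {j : Fin n // j ≠ k} => (j : Fin n))).det := by
  classical
  haveI : Unique {a : Fin n // ¬ a ≠ k} :=
    ⟨⟨⟨k, by simp⟩⟩, fun a => Subtype.ext (not_not.mp a.2)⟩
  set e := Equiv.sumCompl (fun a : Fin n => a ≠ k) with he
  have key : (M.updateRow k (Pi.single k 1)).submatrix e e =
      Matrix.fromBlocks
        (M.submatrix (fun j : {j : Fin n // j ≠ k} => (j : Fin n))
          (fun j : {j : Fin n // j ≠ k} => (j : Fin n)))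
        (Matrix.of fun (a : {j : Fin n // j ≠ k}) (_ : {j : Fin n // ¬ j ≠ k}) => M (a : Fin n) k)
        0
        (Matrix.of fun _ _ => (1:ℝ)) := by
    ext i j
    rcases i with i | i <;> rcases j with j | j <;>
      simp only [Matrix.submatrix_apply, he, Equiv.sumCompl_apply_inl,
        Equiv.sumCompl_apply_inr, Matrix.fromBlocks_apply₁₁, Matrix.fromBlocks_apply₁₂,
        Matrix.fromBlocks_apply₂₁, Matrix.fromBlocks_apply₂₂, Matrix.of_apply]
    · rw [Matrix.updateRow_ne i.2]
    · rw [Matrix.updateRow_ne i.2]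
      congr 1
      exact (not_not.mp j.2)
    · have hik : (i : Fin n) = k := not_not.mp i.2
      rw [hik, Matrix.updateRow_self]
      simp [Pi.single_eq_of_ne j.2]
    · have hik : (i : Fin n) = k := not_not.mp i.2
      have hjk : (j : Fin n) = k := not_not.mp j.2
      rw [hik, Matrix.updateRow_self, hjk]
      simp
  calc (M.updateRow k (Pi.single k 1)).det
      = ((M.updateRow k (Pi.single k 1)).submatrix e e).det :=
        (Matrix.det_submatrix_equiv_self e _).symm
    _ = _ := by
        rw [key, Matrix.det_fromBlocks_zero₂₁]
        simp [Matrix.det_unique]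

lemma lapBar_rowsum (A : Matrix (Fin n) (Fin n) ℝ) (i : Fin n) :
    ∑ j, lapBar A i j = 0 := by
  simp [lapBar, inDeg, Finset.sum_sub_distrib, Matrix.diagonal_apply,
    Finset.sum_ite_eq' (Finset.univ : Finset (Fin n)) i]

lemma wLbar (hn : 0 < n) (A : Matrix (Fin n) (Fin n) ℝ) (j : Fin n) :
    ∑ i, minorDet A i * lapBar A i j = 0 := by
  have hadj : ∀ i k : Fin n, (lapBar A).adjugate i k = minorDet A k := by
    intro i k
    rw [Matrix.adjugate_apply,
      det_updateRow_single_eq (lapBar A) k hn (fun l _ => lapBar_rowsum A l) i,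
      det_updateRow_single_self]
    rfl
  have hdet : (lapBar A).det = 0 :=
    det_eq_zero_of_rowsum_zero hn _ (lapBar_rowsum A)
  have hmul := Matrix.adjugate_mul (lapBar A)
  have := congrFun (congrFun hmul j) j
  rw [hdet] at this
  simp only [Matrix.mul_apply, Matrix.smul_apply, zero_smul] at this
  rw [← this]
  apply Finset.sum_congr rfl
  intro k _
  rw [hadj j k]

lemma w_indeg (hn : 0 < n) (A : Matrix (Fin n) (Fin n) ℝ) (j : Fin n) :
    ∑ i, minorDet A i * |A i j| = minorDet A j * inDeg A j := by
  have h := wLbar hn A j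
  simp only [lapBar, Matrix.sub_apply, Matrix.of_apply, Matrix.diagonal_apply,
    mul_sub, Finset.sum_sub_distrib] at h
  have h2 : (∑ i, minorDet A i * if i = j then inDeg A i else 0) = minorDet A j * inDeg A j := by
    simp [mul_ite, Finset.sum_ite_eq']
  linarith [h, h2]

lemma exists_ne_of_two_le (hn : 2 ≤ n) (k : Fin n) : ∃ j : Fin n, j ≠ k := by
  haveI : Nontrivial (Fin n) := Fin.nontrivial_iff_two_le.mpr hn
  exact exists_ne k

lemma inDeg_pos (hn : 2 ≤ n) (A : Matrix (Fin n) (Fin n) ℝ)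
    (hsc : StronglyConnected A) (k : Fin n) : 0 < inDeg A k := by
  obtain ⟨j, hj⟩ := exists_ne_of_two_le hn k
  have hpath := hsc j k hj
  have : ∃ u, A k u ≠ 0 := by
    cases hpath with
    | single h => exact ⟨j, h⟩
    | tail _ h => exact ⟨_, h⟩
  obtain ⟨u, hu⟩ := this
  have h1 : |A k u| ≤ inDeg A k :=
    Finset.single_le_sum (f := fun j => |A k j|) (fun j _ => abs_nonneg _)
      (Finset.mem_univ u)
  have h2 : 0 < |A k u| := abs_pos.mpr hu
  linarith

lemma minorDet_pos (hn : 2 ≤ n) (A : Matrix (Fin n) (Fin n) ℝ)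
    (hsc : StronglyConnected A) (i : Fin n) : 0 < minorDet A i := by
  classical
  set S := {j : Fin n // j ≠ i}
  haveI : Nonempty S := by
    obtain ⟨j, hj⟩ := exists_ne_of_two_le hn i
    exact ⟨⟨j, hj⟩⟩
  set M : ℝ → Matrix S S ℝ := fun t =>
    Matrix.of fun a b => (if a = b then inDeg A a.1 else 0) - t * |A a.1 b.1| with hM
  have hdpos : ∀ k : Fin n, 0 < inDeg A k := inDeg_pos hn A hsc
  -- sum over the subtype vs full sum
  have hsub : ∀ u : Fin n, (∑ b : S, |A u b.1|) + |A u i| = inDeg A u := by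
    intro u
    have h1 : ∑ j ∈ Finset.univ.erase i, |A u j| = ∑ b : S, |A u b.1| :=
      Finset.sum_subtype _ (fun x => by simp) _
    rw [← h1, Finset.sum_erase_add _ _ (Finset.mem_univ i)]
    rfl
  -- non-vanishing of the determinant on [0,1]
  have hne : ∀ t : ℝ, 0 ≤ t → t ≤ 1 → (M t).det ≠ 0 := by
    intro t ht0 ht1 hdet
    obtain ⟨v, hv0, hveq⟩ := (Matrix.exists_mulVec_eq_zero_iff).mpr hdet
    obtain ⟨k, -, hk⟩ := Finset.exists_max_image Finset.univ (fun a : S => |v a|)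
      Finset.univ_nonempty
    set c := |v k| with hc
    have hmax : ∀ b : S, |v b| ≤ c := fun b => hk b (Finset.mem_univ b)
    have hcpos : 0 < c := by
      obtain ⟨a, ha⟩ := Function.ne_iff.mp hv0
      exact lt_of_lt_of_le (abs_pos.mpr (by simpa using ha)) (hmax a)
    -- the row equation
    have eqn : ∀ a : S, inDeg A a.1 * v a = t * ∑ b : S, |A a.1 b.1| * v b := by
      intro a
      have := congrFun hveq a
      simp only [Matrix.mulVec, dotProduct, hM, Matrix.of_apply, sub_mul,
        Finset.sum_sub_distrib, ite_mul, zero_mul, Finset.sum_ite_eq,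
        Finset.mem_univ, if_true, Pi.zero_apply] at this
      have h2 : ∑ b : S, t * |A a.1 b.1| * v b = t * ∑ b : S, |A a.1 b.1| * v b := by
        rw [Finset.mul_sum]; apply Finset.sum_congr rfl; intros; ring
      have h3 : (∑ x : S, if a = x then inDeg A a.1 * v x else 0) = inDeg A a.1 * v a :=
        (Finset.sum_eq_single a (fun b _ hb => if_neg (Ne.symm hb)) (by simp)).trans (if_pos rfl)
      linarith [this, h2, h3]
    -- basic estimate for rows achieving the max
    have est : ∀ a : S, |v a| = c →
        inDeg A a.1 * c ≤ t * ∑ b : S, |A a.1 b.1| * |v b| ∧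
        (∑ b : S, |A a.1 b.1| * |v b|) ≤ (inDeg A a.1 - |A a.1 i|) * c := by
      intro a hva
      constructor
      · have h1 : inDeg A a.1 * c = |inDeg A a.1 * v a| := by
          rw [abs_mul, abs_of_nonneg (hdpos a.1).le, hva]
        have h2 : |t * ∑ b : S, |A a.1 b.1| * v b| ≤ t * ∑ b : S, |A a.1 b.1| * |v b| := by
          rw [abs_mul, abs_of_nonneg ht0]
          refine mul_le_mul_of_nonneg_left ?_ ht0
          calc |∑ b : S, |A a.1 b.1| * v b| ≤ ∑ b : S, |(|A a.1 b.1| * v b)| :=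
                Finset.abs_sum_le_sum_abs _ _
            _ = ∑ b : S, |A a.1 b.1| * |v b| := by
                apply Finset.sum_congr rfl; intros b _; rw [abs_mul, abs_abs]
        rw [h1, eqn a]
        exact h2
      · calc ∑ b : S, |A a.1 b.1| * |v b| ≤ ∑ b : S, |A a.1 b.1| * c := by
              apply Finset.sum_le_sum
              intro b _
              exact mul_le_mul_of_nonneg_left (hmax b) (abs_nonneg _)
          _ = (∑ b : S, |A a.1 b.1|) * c := by rw [Finset.sum_mul]
          _ = (inDeg A a.1 - |A a.1 i|) * c := by
              have := hsub a.1; nlinarith [this]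
    rcases lt_or_eq_of_le ht1 with ht1' | ht1'
    · -- t < 1 : strict diagonal dominance
      obtain ⟨h1, h2⟩ := est k rfl
      have h3 : (inDeg A k.1 - |A k.1 i|) * c ≤ inDeg A k.1 * c := by
        nlinarith [abs_nonneg (A k.1 i), hcpos.le]
      have h5 : t * ∑ b : S, |A k.1 b.1| * |v b| ≤ t * (inDeg A k.1 * c) :=
        mul_le_mul_of_nonneg_left (h2.trans h3) ht0
      have h6 : t * (inDeg A k.1 * c) < 1 * (inDeg A k.1 * c) :=
        mul_lt_mul_of_pos_right ht1' (mul_pos (hdpos k.1) hcpos)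
      rw [one_mul] at h6
      linarith
    · -- t = 1 : propagate the max along in-edges back to i
      subst ht1'
      have key : ∀ a : S, |v a| = c →
          A a.1 i = 0 ∧ ∀ b : S, A a.1 b.1 ≠ 0 → |v b| = c := by
        intro a hva
        obtain ⟨h1, h2⟩ := est a hva
        rw [one_mul] at h1
        have hAai : A a.1 i = 0 := by
          have : |A a.1 i| * c ≤ 0 := by nlinarith
          have := le_antisymm (by nlinarith [abs_nonneg (A a.1 i)] : |A a.1 i| ≤ 0)
            (abs_nonneg _) |>.symm
          exact abs_eq_zero.mp this.symm
        refine ⟨hAai, ?_⟩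
        have hsum_eq : ∑ b : S, |A a.1 b.1| * |v b| = ∑ b : S, |A a.1 b.1| * c := by
          have hle : ∑ b : S, |A a.1 b.1| * |v b| ≤ ∑ b : S, |A a.1 b.1| * c := by
            apply Finset.sum_le_sum
            intro b _
            exact mul_le_mul_of_nonneg_left (hmax b) (abs_nonneg _)
          have hge : ∑ b : S, |A a.1 b.1| * c ≤ ∑ b : S, |A a.1 b.1| * |v b| := by
            have : (∑ b : S, |A a.1 b.1|) * c = inDeg A a.1 * c := by
              have := hsub a.1; rw [hAai] at this; simp at this; rw [this]
            calc ∑ b : S, |A a.1 b.1| * c = (∑ b : S, |A a.1 b.1|) * c := by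
                  rw [Finset.sum_mul]
              _ = inDeg A a.1 * c := this
              _ ≤ _ := h1
          linarith
        have := (Finset.sum_eq_sum_iff_of_le
          (fun b _ => mul_le_mul_of_nonneg_left (hmax b) (abs_nonneg _))).mp hsum_eq
        intro b hb
        have hb' := this b (Finset.mem_univ b)
        exact mul_left_cancel₀ (abs_ne_zero.mpr hb) hb'
      -- the propagation predicate
      set P : Fin n → Prop := fun u => ∃ h : u ≠ i, |v ⟨u, h⟩| = c with hP
      have pstep : ∀ u, P u → ∀ l, A u l ≠ 0 → P l := by
        intro u hu l hl
        obtain ⟨hui, hvc⟩ := hu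
        obtain ⟨hAui, hprop⟩ := key ⟨u, hui⟩ hvc
        have hli : l ≠ i := by
          intro h; subst h; exact hl hAui
        exact ⟨hli, hprop ⟨l, hli⟩ hl⟩
      have ppath : ∀ u w : Fin n, Relation.TransGen (fun p q => A q p ≠ 0) u w →
          P w → P u := by
        intro u w h
        induction h with
        | single h' => exact fun hw => pstep _ hw _ h'
        | tail _ h' ih => exact fun hw => ih (pstep _ hw _ h')
      have hPk : P k.1 := ⟨k.2, by rw [hc]⟩
      have hPi : P i := ppath i k.1 (hsc i k.1 (Ne.symm k.2)) hPk
      exact hPi.1 rfl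
  -- continuity + IVT
  have hcont : Continuous fun t => (M t).det := by
    apply Continuous.matrix_det
    apply continuous_matrix
    intro a b
    simp only [hM, Matrix.of_apply]
    exact continuous_const.sub (continuous_id.mul continuous_const)
  have hM0 : (M 0).det = ∏ a : S, inDeg A a.1 := by
    have : M 0 = Matrix.diagonal (fun a : S => inDeg A a.1) := by
      ext a b
      simp [hM, Matrix.diagonal_apply, Subtype.ext_iff]
    rw [this, Matrix.det_diagonal]
  have h0pos : 0 < (M 0).det := by
    rw [hM0]
    exact Finset.prod_pos fun a _ => hdpos a.1
  have h1pos : 0 < (M 1).det := by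
    by_contra h
    push_neg at h
    have h1 : (M 1).det < 0 := lt_of_le_of_ne h (hne 1 zero_le_one le_rfl)
    have : (0:ℝ) ∈ Set.Icc ((M 1).det) ((M 0).det) := ⟨h1.le, h0pos.le⟩
    obtain ⟨t, ht, hft⟩ := intermediate_value_Icc' (zero_le_one) hcont.continuousOn this
    exact hne t ht.1 ht.2 hft
  have : minorDet A i = (M 1).det := by
    unfold minorDet
    congr 1
    ext a b
    simp only [Matrix.submatrix_apply, lapBar, Matrix.sub_apply, Matrix.diagonal_apply,
      Matrix.of_apply, hM, one_mul]
    by_cases hab : a = b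
    · simp [hab]
    · rw [if_neg hab, if_neg (fun h => hab (Subtype.coe_injective h))]
  rw [this]
  exact h1pos

lemma sign_mul_abs' (a : ℝ) : Real.sign a * |a| = a := by
  rcases lt_trichotomy a 0 with h | h | h
  · rw [Real.sign_of_neg h, abs_of_neg h]; ring
  · simp [h]
  · rw [Real.sign_of_pos h, abs_of_pos h]; ring

lemma abs_mul_sign_sq (a x : ℝ) : |a| * Real.sign a ^ 2 = |a| := by
  rcases eq_or_ne a 0 with h | h
  · simp [h]
  · rcases Real.sign_apply_eq_of_ne_zero a h with h' | h' <;> rw [h'] <;> ring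

lemma qform_eq (hn : 0 < n) (A : Matrix (Fin n) (Fin n) ℝ) (x : Fin n → ℝ) :
    x ⬝ᵥ (mirrorLap A) *ᵥ x = (1/2) * PhiE A x := by
  -- reduce to the W·L part
  have hWsymm : (Wmat A)ᵀ = Wmat A := Matrix.diagonal_transpose _
  have hsym : x ⬝ᵥ ((lapOf A)ᵀ * Wmat A) *ᵥ x = x ⬝ᵥ (Wmat A * lapOf A) *ᵥ x := by
    have h1 : (lapOf A)ᵀ * Wmat A = (Wmat A * lapOf A)ᵀ := by
      rw [Matrix.transpose_mul, hWsymm]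
    rw [h1, ← Matrix.vecMul_transpose, Matrix.transpose_transpose,
      dotProduct_mulVec]
    exact dotProduct_comm _ _
  have hmain : x ⬝ᵥ (mirrorLap A) *ᵥ x = x ⬝ᵥ (Wmat A * lapOf A) *ᵥ x := by
    rw [mirrorLap, Matrix.smul_mulVec, dotProduct_smul,
      Matrix.add_mulVec, dotProduct_add, hsym, smul_eq_mul]
    ring
  rw [hmain]
  set T1 := ∑ i, ∑ j, minorDet A i * |A i j| * x i ^ 2 with hT1
  set T2 := ∑ i, ∑ j, minorDet A i * A i j * x i * x j with hT2
  set T3 := ∑ i, ∑ j, minorDet A i * |A i j| * x j ^ 2 with hT3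
  have ha : x ⬝ᵥ (Wmat A * lapOf A) *ᵥ x = T1 - T2 := by
    rw [dotProduct]
    simp only [Matrix.mulVec, dotProduct, Wmat, Matrix.diagonal_mul, lapOf,
      Matrix.sub_apply, Matrix.diagonal_apply, Finset.mul_sum]
    rw [hT1, hT2, ← Finset.sum_sub_distrib]
    apply Finset.sum_congr rfl
    intro i _
    have h1 : ∑ j, x i * (minorDet A i * ((if i = j then inDeg A i else 0) - A i j) * x j)
        = (∑ j, x i * (minorDet A i * (if i = j then inDeg A i else 0) * x j))
          - ∑ j, minorDet A i * A i j * x i * x j := by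
      rw [← Finset.sum_sub_distrib]
      apply Finset.sum_congr rfl
      intro j _
      ring
    have h2 : (∑ j, x i * (minorDet A i * (if i = j then inDeg A i else 0) * x j))
        = minorDet A i * inDeg A i * x i ^ 2 := by
      simp only [mul_ite, mul_zero, ite_mul, zero_mul, Finset.sum_ite_eq,
        Finset.mem_univ, if_true]
      ring
    have h3 : minorDet A i * inDeg A i * x i ^ 2 = ∑ j, minorDet A i * |A i j| * x i ^ 2 := by
      rw [inDeg, Finset.mul_sum, Finset.sum_mul]
    rw [h1, h2, h3, ← Finset.sum_sub_distrib]
  have hterm : ∀ i j, minorDet A i * |A i j| * (x i - Real.sign (A i j) * x j) ^ 2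
      = minorDet A i * |A i j| * x i ^ 2 - 2 * (minorDet A i * A i j * x i * x j)
        + minorDet A i * |A i j| * x j ^ 2 := by
    intro i j
    have h1 : Real.sign (A i j) * |A i j| = A i j := sign_mul_abs' _
    have h2 : |A i j| * Real.sign (A i j) ^ 2 = |A i j| := abs_mul_sign_sq _ 0
    calc minorDet A i * |A i j| * (x i - Real.sign (A i j) * x j) ^ 2
        = minorDet A i * (|A i j| * x i ^ 2)
            - 2 * (minorDet A i * ((Real.sign (A i j) * |A i j|) * x i * x j))
            + minorDet A i * ((|A i j| * Real.sign (A i j) ^ 2) * x j ^ 2) := by ring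
      _ = _ := by rw [h1, h2]; ring
  have hsplit : ∀ f g h : Fin n → Fin n → ℝ,
      (∑ i, ∑ j, (f i j - 2 * g i j + h i j))
        = (∑ i, ∑ j, f i j) - 2 * (∑ i, ∑ j, g i j) + (∑ i, ∑ j, h i j) := by
    intro f g h
    simp [Finset.sum_add_distrib, Finset.sum_sub_distrib, Finset.mul_sum]
  have hb : PhiE A x = T1 - 2 * T2 + T3 := by
    rw [PhiE]
    have : (∑ i, ∑ j, minorDet A i * |A i j| * (x i - Real.sign (A i j) * x j) ^ 2)
        = ∑ i, ∑ j, (minorDet A i * |A i j| * x i ^ 2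
            - 2 * (minorDet A i * A i j * x i * x j)
            + minorDet A i * |A i j| * x j ^ 2) := by
      apply Finset.sum_congr rfl
      intro i _
      apply Finset.sum_congr rfl
      intro j _
      exact hterm i j
    rw [this, hsplit]
  have hc : T3 = T1 := by
    rw [hT3, hT1, Finset.sum_comm]
    apply Finset.sum_congr rfl
    intro j _
    have h4 : ∑ i, minorDet A i * |A i j| * x j ^ 2
        = (∑ i, minorDet A i * |A i j|) * x j ^ 2 := by rw [Finset.sum_mul]
    rw [h4, w_indeg hn A j, inDeg, Finset.mul_sum, Finset.sum_mul]
  rw [ha, hb, hc]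
  ring

lemma sign_mul_self' (a : ℝ) : Real.sign a * a = |a| := by
  rcases lt_trichotomy a 0 with h | h | h
  · rw [Real.sign_of_neg h, abs_of_neg h]; ring
  · simp [h]
  · rw [Real.sign_of_pos h, abs_of_pos h]; ring

end AuxLemmas

/-- `G` is structurally balanced iff `L̂` is positive semidefinite and `0`
is an eigenvalue of `L̂` of multiplicity exactly one (equivalently, since `L̂` is
symmetric, its kernel is one-dimensional). -/
theorem balanced_iff_psd_and_simple_zero (n : ℕ) (hn : 2 ≤ n)
    (A : Matrix (Fin n) (Fin n) ℝ)
    (hdiag : ∀ i, A i i = 0) (hdigon : ∀ i j, 0 ≤ A i j * A j i)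
    (hsc : StronglyConnected A) :
    StructBalanced A ↔
      (mirrorLap A).PosSemidef ∧
        Module.finrank ℝ (LinearMap.ker (mirrorLap A).mulVecLin) = 1 := by
  have hn0 : 0 < n := by omega
  have hpos : ∀ i, 0 < minorDet A i := minorDet_pos hn A hsc
  -- PhiE is a sum of nonnegative terms
  have hterm_nonneg : ∀ x : Fin n → ℝ, ∀ i j : Fin n,
      0 ≤ minorDet A i * |A i j| * (x i - Real.sign (A i j) * x j) ^ 2 := by
    intro x i j
    apply mul_nonneg (mul_nonneg (hpos i).le (abs_nonneg _)) (sq_nonneg _)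
  have hPhi_nonneg : ∀ x, 0 ≤ PhiE A x := fun x =>
    Finset.sum_nonneg fun i _ => Finset.sum_nonneg fun j _ => hterm_nonneg x i j
  -- edge relation from vanishing potential
  have edge_rel : ∀ x : Fin n → ℝ, PhiE A x = 0 →
      ∀ i j, A i j ≠ 0 → x i = Real.sign (A i j) * x j := by
    intro x hx i j hij
    have h1 := (Finset.sum_eq_zero_iff_of_nonneg
      (fun i _ => Finset.sum_nonneg fun j _ => hterm_nonneg x i j)).mp hx i (Finset.mem_univ i)
    have h2 := (Finset.sum_eq_zero_iff_of_nonneg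
      (fun j _ => hterm_nonneg x i j)).mp h1 j (Finset.mem_univ j)
    have h3 : (x i - Real.sign (A i j) * x j) ^ 2 = 0 := by
      have hne : minorDet A i * |A i j| ≠ 0 :=
        (mul_pos (hpos i) (abs_pos.mpr hij)).ne'
      exact (mul_eq_zero.mp h2).resolve_left hne
    have := pow_eq_zero_iff (n := 2) (by norm_num) |>.mp h3
    linarith [this]
  -- zero quadratic form for kernel elements
  have ker_phi : ∀ x : Fin n → ℝ, (mirrorLap A).mulVecLin x = 0 → PhiE A x = 0 := by
    intro x hx
    have h0 : (mirrorLap A) *ᵥ x = 0 := by rwa [Matrix.mulVecLin_apply] at hx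
    have := qform_eq hn0 A x
    rw [h0, dotProduct_zero] at this
    linarith
  -- symmetry
  have hWsymm : (Wmat A)ᵀ = Wmat A := Matrix.diagonal_transpose _
  have hherm : (mirrorLap A).IsHermitian := by
    rw [Matrix.IsHermitian, Matrix.conjTranspose_eq_transpose_of_trivial, mirrorLap,
      Matrix.transpose_smul, Matrix.transpose_add, Matrix.transpose_mul, Matrix.transpose_mul,
      Matrix.transpose_transpose, hWsymm, add_comm]
  have hpsd : (mirrorLap A).PosSemidef := by
    refine Matrix.posSemidef_iff_dotProduct_mulVec.mpr ⟨hherm, fun x => ?_⟩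
    have : star x = x := by
      funext i; simp [Pi.star_apply, star_trivial]
    rw [this, qform_eq hn0 A x]
    have := hPhi_nonneg x
    linarith
  constructor
  · -- balanced → PSD and one-dimensional kernel
    rintro ⟨σ, hgauge, hbal⟩
    have hs2 : ∀ i, σ i * σ i = 1 := by
      intro i; rcases hgauge i with h | h <;> rw [h] <;> norm_num
    have hσA : ∀ i j, σ i * A i j * σ j = |A i j| := by
      intro i j
      have habs : |σ i * A i j * σ j| = |A i j| := by
        rw [abs_mul, abs_mul]
        rcases hgauge i with h | h <;> rcases hgauge j with h' | h' <;>
          rw [h, h'] <;> simp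
      rw [← habs, abs_of_nonneg (hbal i j)]
    have hAσ : ∀ i j, A i j * σ j = σ i * |A i j| := by
      intro i j
      have := hσA i j
      calc A i j * σ j = (σ i * σ i) * (A i j * σ j) := by rw [hs2 i]; ring
        _ = σ i * (σ i * A i j * σ j) := by ring
        _ = σ i * |A i j| := by rw [this]
    have hσA' : ∀ i j, σ i * A i j = |A i j| * σ j := by
      intro i j
      calc σ i * A i j = (σ i * A i j * σ j) * σ j := by
            rw [mul_assoc (σ i * A i j), hs2 j]; ring
        _ = |A i j| * σ j := by rw [hσA i j]
    -- L σ = 0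
    have hLσ : lapOf A *ᵥ σ = 0 := by
      funext i
      rw [lapOf, Matrix.sub_mulVec]
      simp only [Pi.sub_apply, Matrix.mulVec_diagonal, Pi.zero_apply]
      have : (A *ᵥ σ) i = σ i * inDeg A i := by
        rw [Matrix.mulVec, dotProduct, inDeg, Finset.mul_sum]
        exact Finset.sum_congr rfl fun j _ => hAσ i j
      rw [this]
      ring
    -- Lᵀ W σ = 0
    have hL2 : ((lapOf A)ᵀ * Wmat A) *ᵥ σ = 0 := by
      funext j
      rw [Matrix.mulVec, dotProduct]
      simp only [Wmat, Matrix.mul_diagonal, Matrix.transpose_apply, Pi.zero_apply]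
      have hterm : ∀ i, lapOf A i j * minorDet A i * σ i
          = σ j * (minorDet A i * lapBar A i j) := by
        intro i
        have hij : lapOf A i j * σ i = σ j * lapBar A i j := by
          simp only [lapOf, lapBar, Matrix.sub_apply, Matrix.diagonal_apply, Matrix.of_apply]
          rw [sub_mul, mul_sub]
          congr 1
          · by_cases h : i = j
            · subst h; ring
            · simp [h]
          · linear_combination hσA' i j
        calc lapOf A i j * minorDet A i * σ i = (lapOf A i j * σ i) * minorDet A i := by ring
          _ = σ j * lapBar A i j * minorDet A i := by rw [hij]
          _ = σ j * (minorDet A i * lapBar A i j) := by ring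
      rw [Finset.sum_congr rfl fun i _ => hterm i, ← Finset.mul_sum, wLbar hn0 A j, mul_zero]
    have hkerσ : (mirrorLap A).mulVecLin σ = 0 := by
      rw [Matrix.mulVecLin_apply, mirrorLap, Matrix.smul_mulVec, Matrix.add_mulVec,
        ← Matrix.mulVec_mulVec, hLσ, Matrix.mulVec_zero, hL2]
      simp
    have hσ0 : σ ≠ 0 := by
      intro h
      have := hs2 ⟨0, hn0⟩
      rw [h] at this
      simp at this
    -- kernel is the span of σ
    have hker : LinearMap.ker (mirrorLap A).mulVecLin = Submodule.span ℝ {σ} := by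
      apply le_antisymm
      · intro x hx
        have hphi : PhiE A x = 0 := ker_phi x (LinearMap.mem_ker.mp hx)
        have hedge : ∀ p q, A q p ≠ 0 → σ p * x p = σ q * x q := by
          intro p q hqp
          have hx1 : x q = Real.sign (A q p) * x p := edge_rel x hphi q p hqp
          have hsign : Real.sign (A q p) = σ q * σ p := by
            have hA : A q p = σ q * σ p * |A q p| := by
              have := hAσ q p
              calc A q p = (A q p * σ p) * σ p := by rw [mul_assoc, hs2 p]; ring
                _ = σ q * σ p * |A q p| := by rw [this]; ring
            have habspos : 0 < |A q p| := abs_pos.mpr hqp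
            rcases hgauge q with h1 | h1 <;> rcases hgauge p with h2 | h2 <;>
              rw [h1, h2] at hA ⊢ <;> simp only [one_mul, neg_one_mul, neg_neg, mul_one] <;>
              rw [hA] <;> simp [Real.sign_of_pos, Real.sign_of_neg, habspos,
                neg_lt_zero.mpr habspos]
          rw [hx1, hsign]
          calc σ p * x p = (σ q * σ q) * (σ p * x p) := by rw [hs2 q]; ring
            _ = σ q * (σ q * σ p * x p) := by ring
        have hconst' : ∀ u w : Fin n, Relation.TransGen (fun p q => A q p ≠ 0) u w →
            σ u * x u = σ w * x w := by
          intro u w hpath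
          induction hpath with
          | single h' => exact hedge _ _ h'
          | tail _ h' ih => exact ih.trans (hedge _ _ h')
        have hconst : ∀ u w : Fin n, σ u * x u = σ w * x w := by
          intro u w
          rcases eq_or_ne u w with h | h
          · rw [h]
          · exact hconst' u w (hsc u w h)
        have i0 : Fin n := ⟨0, hn0⟩
        have hx_eq : x = (σ i0 * x i0) • σ := by
          funext u
          have hu := hconst u i0
          calc x u = (σ u * σ u) * x u := by rw [hs2 u]; ring
            _ = σ u * (σ u * x u) := by ring
            _ = σ u * (σ i0 * x i0) := by rw [hu]
            _ = ((σ i0 * x i0) • σ) u := by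
                simp only [Pi.smul_apply, smul_eq_mul]; ring
        exact Submodule.mem_span_singleton.mpr ⟨σ i0 * x i0, hx_eq.symm⟩
      · rw [Submodule.span_le, Set.singleton_subset_iff]
        exact LinearMap.mem_ker.mpr hkerσ
    refine ⟨hpsd, ?_⟩
    rw [hker]
    exact finrank_span_singleton hσ0
  · -- PSD with simple zero → balanced
    rintro ⟨-, hdim⟩
    have hbot : LinearMap.ker (mirrorLap A).mulVecLin ≠ ⊥ := by
      intro h
      rw [h] at hdim
      simp [finrank_bot] at hdim
    obtain ⟨x, hxker, hx0⟩ := Submodule.ne_bot_iff _ |>.mp hbot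
    have hphi : PhiE A x = 0 := ker_phi x (LinearMap.mem_ker.mp hxker)
    have habs : ∀ p q : Fin n, A q p ≠ 0 → |x p| = |x q| := by
      intro p q hqp
      have h1 : x q = Real.sign (A q p) * x p := edge_rel x hphi q p hqp
      rcases Real.sign_apply_eq_of_ne_zero (A q p) hqp with h | h <;>
        rw [h1, h] <;> simp [abs_mul]
    have hall' : ∀ u w : Fin n, Relation.TransGen (fun p q => A q p ≠ 0) u w →
        |x u| = |x w| := by
      intro u w hpath
      induction hpath with
      | single h' => exact habs _ _ h'
      | tail _ h' ih => exact ih.trans (habs _ _ h')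
    have hall : ∀ u w : Fin n, |x u| = |x w| := by
      intro u w
      rcases eq_or_ne u w with h | h
      · rw [h]
      · exact hall' u w (hsc u w h)
    obtain ⟨k, hk⟩ := Function.ne_iff.mp hx0
    have hk' : x k ≠ 0 := by simpa using hk
    have hxu : ∀ u, x u ≠ 0 := by
      intro u
      intro h
      apply hk'
      have := hall u k
      rw [h] at this
      simp at this
      exact abs_eq_zero.mp this.symm
    refine ⟨fun u => Real.sign (x u), fun i => (Real.sign_apply_eq_of_ne_zero _ (hxu i)).symm, ?_⟩
    intro i j
    rcases eq_or_ne (A i j) 0 with h | h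
    · simp [h]
    · have hx1 : x i = Real.sign (A i j) * x j := edge_rel x hphi i j h
      have hsx : Real.sign (x i) = Real.sign (A i j) * Real.sign (x j) := by
        rcases Real.sign_apply_eq_of_ne_zero (A i j) h with hs | hs <;> rw [hx1, hs]
        · rw [neg_one_mul, Real.sign_neg, neg_one_mul]
        · rw [one_mul, one_mul]
      have hs2j : Real.sign (x j) * Real.sign (x j) = 1 := by
        rcases Real.sign_apply_eq_of_ne_zero _ (hxu j) with h' | h' <;> rw [h'] <;> norm_num
      calc (0:ℝ) ≤ |A i j| := abs_nonneg _
        _ = (Real.sign (A i j) * A i j) * (Real.sign (x j) * Real.sign (x j)) := by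
            rw [hs2j, sign_mul_self']; ring
        _ = Real.sign (x i) * A i j * Real.sign (x j) := by rw [hsx]; ring
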